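/- Let A be a square matrix with nonnegative real entries. If A has an eigenvector f with strictly positive entries, then the corresponding eigenvalue is the largest nonnegative real eigenvalue of A (i.e., it dominates the absolute value of every eigenvalue of A). -/

import Mathlib

/-- Frobenius-Perron theorem, part (3): if a nonnegative square real matrix `A` has an
eigenvector `f` with strictly positive entries and eigenvalue `lam`, then `lam` dominates
the absolute value of every (complex) eigenvalue of `A`. -/
theorem stmt0 (n : ℕ) (A : Matrix (Fin n) (Fin n) ℝ)
    (hA : ∀ i j, 0 ≤ A i j)
    (f : Fin n → ℝ) (hf : ∀ i, 0 < f i)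
    (lam : ℝ) (heig : A.mulVec f = lam • f) :
    ∀ μ : ℂ, (∃ v : Fin n → ℂ, v ≠ 0 ∧
        (A.map (fun x : ℝ => (x : ℂ))).mulVec v = μ • v) →
      ‖μ‖ ≤ lam := by
  rintro μ ⟨v, hv, hμ⟩
  obtain ⟨j0, hj0⟩ := Function.ne_iff.mp hv
  have hne : Nonempty (Fin n) := ⟨j0⟩
  -- pick i maximizing g i = |v i| / f i
  obtain ⟨i, -, hi⟩ := Finset.exists_max_image Finset.univ
    (fun i => ‖v i‖ / f i) ⟨j0, Finset.mem_univ j0⟩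
  have hbound : ∀ j, ‖v j‖ ≤ (‖v i‖ / f i) * f j := by
    intro j
    have := hi j (Finset.mem_univ j)
    calc ‖v j‖ = (‖v j‖ / f j) * f j := by
          rw [div_mul_cancel₀ _ (hf j).ne']
      _ ≤ (‖v i‖ / f i) * f j := by
          exact mul_le_mul_of_nonneg_right this (hf j).le
  have hvi : 0 < ‖v i‖ := by
    have h1 : 0 < ‖v j0‖ / f j0 := by
      apply div_pos _ (hf j0)
      simpa using hj0
    have h2 := h1.trans_le (hi j0 (Finset.mem_univ j0))
    have := mul_pos h2 (hf i)
    calc (0:ℝ) < (‖v i‖ / f i) * f i := this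
      _ = ‖v i‖ := by rw [div_mul_cancel₀ _ (hf i).ne']
  have key : ‖μ‖ * ‖v i‖ ≤ lam * ‖v i‖ := by
    have h1 : (μ • v) i = ∑ j, (A i j : ℂ) * v j := by
      rw [← hμ]; simp [Matrix.mulVec, dotProduct]
    have h2 : ‖μ‖ * ‖v i‖ = ‖∑ j, (A i j : ℂ) * v j‖ := by
      rw [← h1]; simp [norm_mul]
    rw [h2]
    calc ‖∑ j, (A i j : ℂ) * v j‖
        ≤ ∑ j, A i j * ‖v j‖ := by
          refine (norm_sum_le _ _).trans_eq ?_
          refine Finset.sum_congr rfl fun j _ => ?_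
          simp [norm_mul, Complex.norm_real, abs_of_nonneg (hA i j)]
      _ ≤ ∑ j, A i j * ((‖v i‖ / f i) * f j) := by
          refine Finset.sum_le_sum fun j _ => ?_
          exact mul_le_mul_of_nonneg_left (hbound j) (hA i j)
      _ = (‖v i‖ / f i) * ∑ j, A i j * f j := by
          rw [Finset.mul_sum]; refine Finset.sum_congr rfl fun j _ => by ring
      _ = (‖v i‖ / f i) * (lam * f i) := by
          have : A.mulVec f i = lam * f i := by rw [heig]; simp
          rw [← this]; rfl
      _ = lam * ‖v i‖ := by
          have h3 : f i ≠ 0 := (hf i).ne'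
          field_simp
  exact le_of_mul_le_mul_right key hvi
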